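/- For any element g ∈ Sp(V) of finite order acting on a finite-dimensional complex symplectic vector space V, the rank rk(id_V − g) is an even integer. -/

import Mathlib

open Module LinearMap

/-- Auxiliary: a nondegenerate alternating bilinear form forces even dimension. -/
lemma even_finrank_of_alt_nondeg : ∀ (n : ℕ) (V : Type*) [AddCommGroup V] [Module ℂ V]
    [FiniteDimensional ℂ V] (ω : LinearMap.BilinForm ℂ V), ω.IsAlt → ω.Nondegenerate →
    Module.finrank ℂ V = n → Even n := by
  intro n
  induction n using Nat.strong_induction_on with
  | _ n ih =>
    intro V _ _ _ ω hAlt hN hdim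
    rcases Nat.eq_zero_or_pos n with h0 | hpos
    · simp [h0]
    have : Nontrivial V := nontrivial_of_finrank_pos (R := ℂ) (by omega : 0 < Module.finrank ℂ V)
    obtain ⟨e, he⟩ := exists_ne (0 : V)
    have hex : ¬ ∀ v, ω e v = 0 := fun h => he (hN.1 e h)
    push_neg at hex
    obtain ⟨f, hf⟩ := hex
    set c : ℂ := ω e f with hc
    -- the map v ↦ (ω e v, ω f v)
    set φ : V →ₗ[ℂ] ℂ × ℂ := LinearMap.prod (ω e) (ω f) with hφ
    have hsurj : Function.Surjective φ := by
      rintro ⟨a, b⟩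
      refine ⟨(a / c) • f - (b / c) • e, ?_⟩
      have hee : ω e e = 0 := hAlt e
      have hff : ω f f = 0 := hAlt f
      have hfe : ω f e = -c := by
        rw [hc, ← LinearMap.BilinForm.IsAlt.neg_eq hAlt]
      simp only [hφ, LinearMap.prod_apply, Function.prod, map_sub, map_smul, smul_eq_mul,
        hee, hff, hfe]
      simp only [Prod.smul_mk, Prod.mk_sub_mk, Prod.ext_iff, smul_eq_mul, ← hc]
      constructor <;> field_simp <;> ring
    set K : Submodule ℂ V := LinearMap.ker φ with hK
    have hrange : LinearMap.range φ = ⊤ := LinearMap.range_eq_top.mpr hsurj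
    have hdimK : Module.finrank ℂ K + 2 = n := by
      have := LinearMap.finrank_range_add_finrank_ker φ
      rw [hrange, ← hK] at this
      have h2 : Module.finrank ℂ (⊤ : Submodule ℂ (ℂ × ℂ)) = 2 := by
        simp [finrank_top]
      omega
    -- membership in K
    have hmemK : ∀ v : V, v ∈ K ↔ ω e v = 0 ∧ ω f v = 0 := by
      intro v
      simp [hK, hφ, LinearMap.mem_ker, LinearMap.prod_apply, Function.prod, Prod.ext_iff]
    -- the restriction to K is alternating and nondegenerate
    have hAltK : (ω.restrict K).IsAlt := fun x => hAlt x
    have hNK : (ω.restrict K).Nondegenerate := by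
      refine (LinearMap.IsRefl.nondegenerate_iff_separatingLeft (LinearMap.IsAlt.isRefl hAltK)).mpr ?_
      intro w hw
      have hwV : ∀ v : V, ω (w : V) v = 0 := by
        intro v
        have hweK := (hmemK w).mp w.2
        -- decompose v
        have hkey : v - ((ω e v / c) • f - (ω f v / c) • e) ∈ K := by
          rw [hmemK]
          have hee : ω e e = 0 := hAlt e
          have hff : ω f f = 0 := hAlt f
          have hfe : ω f e = -c := by
            rw [hc, ← LinearMap.BilinForm.IsAlt.neg_eq hAlt]
          constructor
          · simp only [map_sub, map_smul, smul_eq_mul, hee, hff, hfe, ← hc]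
            field_simp
            ring
          · simp only [map_sub, map_smul, smul_eq_mul, hee, hff, hfe, ← hc]
            field_simp
            ring
        have h1 : ω (w : V) (v - ((ω e v / c) • f - (ω f v / c) • e)) = 0 :=
          hw ⟨_, hkey⟩
        have hwe : ω (w : V) e = 0 := by
          have := hweK.1
          rw [← LinearMap.BilinForm.IsAlt.neg_eq hAlt, this, neg_zero]
        have hwf : ω (w : V) f = 0 := by
          have := hweK.2
          rw [← LinearMap.BilinForm.IsAlt.neg_eq hAlt, this, neg_zero]
        have expand : ω (w : V) (v - ((ω e v / c) • f - (ω f v / c) • e))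
            = ω (w : V) v - ((ω e v / c) * ω (w : V) f - (ω f v / c) * ω (w : V) e) := by
          simp [map_sub, map_smul, smul_eq_mul]
        rw [expand, hwe, hwf] at h1
        simpa using h1
      have : (w : V) = 0 := hN.1 _ hwV
      exact Subtype.ext this
    obtain ⟨k, hk⟩ := ih (Module.finrank ℂ K) (by omega) K (ω.restrict K) hAltK hNK rfl
    exact ⟨k + 1, by omega⟩

/-- For a symplectic automorphism `g ∈ Sp(V)` of finite order on a
finite-dimensional complex symplectic vector space, the rank `rk (id − g) = dim Image (id − g)`
is an even integer. -/
theorem even_rank_id_sub_of_symplectic_finOrder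
    (V : Type*) [AddCommGroup V] [Module ℂ V] [FiniteDimensional ℂ V]
    (ω : LinearMap.BilinForm ℂ V) (hAlt : ω.IsAlt) (hNondeg : ω.Nondegenerate)
    (g : V ≃ₗ[ℂ] V) (hg : ∀ u v : V, ω (g u) (g v) = ω u v)
    (hfin : IsOfFinOrder g) :
    Even (Module.finrank ℂ (LinearMap.range ((1 : V →ₗ[ℂ] V) - g.toLinearMap))) := by
  set W : Submodule ℂ V := LinearMap.range ((1 : V →ₗ[ℂ] V) - g.toLinearMap) with hWdef
  obtain ⟨n, hn, hgn⟩ := hfin.exists_pow_eq_one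
  -- orthogonality of fixed vectors against W
  have horth : ∀ p : V, g p = p → ∀ w ∈ W, ω p w = 0 := by
    intro p hp w hw
    obtain ⟨u, rfl⟩ := hw
    have h1 : ((1 : V →ₗ[ℂ] V) - g.toLinearMap) u = u - g u := by
      simp [LinearMap.sub_apply]
    rw [h1, map_sub]
    have h2 : ω p (g u) = ω p u := by
      conv_lhs => rw [← hp]
      exact hg p u
    rw [h2, sub_self]
  -- each v - g^i v lies in W
  have hsub : ∀ (v : V) (i : ℕ), v - (g ^ i) v ∈ W := by
    intro v i
    induction i with
    | zero => simp
    | succ i ihi =>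
      have hstep : (g ^ i) v - (g ^ (i + 1)) v ∈ W := by
        refine ⟨(g ^ i) v, ?_⟩
        have : (g ^ (i + 1)) v = g ((g ^ i) v) := by
          rw [pow_succ' g i]; rfl
        simp [LinearMap.sub_apply, this]
      have := Submodule.add_mem W ihi hstep
      simpa [sub_add_sub_cancel] using this
  -- decomposition: every vector is fixed-part plus W-part
  have hdecomp : ∀ v : V, ∃ p : V, g p = p ∧ v - p ∈ W := by
    intro v
    set S : V := ∑ i ∈ Finset.range n, (g ^ i) v with hS
    refine ⟨(n : ℂ)⁻¹ • S, ?_, ?_⟩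
    · -- g fixes the average
      have key : ∑ i ∈ Finset.range n, (g ^ (i + 1)) v = S := by
        have h1 := Finset.sum_range_succ' (fun i => (g ^ i) v) n
        have h2 := Finset.sum_range_succ (fun i => (g ^ i) v) n
        have hfn : (g ^ n) v = v := by rw [hgn]; rfl
        have h3 := h1.symm.trans h2
        simp only [pow_zero] at h3
        rw [hfn, show (1 : V ≃ₗ[ℂ] V) v = v from rfl] at h3
        exact add_right_cancel h3
      have hgS : g S = S := by
        rw [hS, map_sum]
        calc ∑ i ∈ Finset.range n, g ((g ^ i) v)
            = ∑ i ∈ Finset.range n, (g ^ (i + 1)) v := by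
              refine Finset.sum_congr rfl fun i _ => ?_
              rw [pow_succ' g i]; rfl
          _ = S := key
      rw [map_smul, hgS]
    · have hv : v - (n : ℂ)⁻¹ • S = (n : ℂ)⁻¹ • ∑ i ∈ Finset.range n, (v - (g ^ i) v) := by
        rw [Finset.sum_sub_distrib, smul_sub, Finset.sum_const, Finset.card_range, ← hS]
        congr 1
        have hnc : (n : ℂ) ≠ 0 := Nat.cast_ne_zero.mpr hn.ne'
        rw [← Nat.cast_smul_eq_nsmul ℂ n v, smul_smul, inv_mul_cancel₀ hnc, one_smul]
      rw [hv]
      exact Submodule.smul_mem W _ (Submodule.sum_mem W fun i _ => hsub v i)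
  -- restriction of ω to W is alternating and nondegenerate
  have hAltW : (ω.restrict W).IsAlt := fun x => hAlt x
  have hNW : (ω.restrict W).Nondegenerate := by
    refine (LinearMap.IsRefl.nondegenerate_iff_separatingLeft (LinearMap.IsAlt.isRefl hAltW)).mpr ?_
    intro w hw
    have hwV : ∀ v : V, ω (w : V) v = 0 := by
      intro v
      obtain ⟨p, hp, hvp⟩ := hdecomp v
      have h1 : ω (w : V) (v - p) = 0 := hw ⟨v - p, hvp⟩
      have h2 : ω (w : V) p = 0 := by
        have := horth p hp (w : V) w.2
        rw [← LinearMap.BilinForm.IsAlt.neg_eq hAlt, this, neg_zero]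
      have : ω (w : V) v = ω (w : V) (v - p) + ω (w : V) p := by
        rw [← map_add]; congr 1; abel
      rw [this, h1, h2, add_zero]
    exact Subtype.ext (hNondeg.1 _ hwV)
  exact even_finrank_of_alt_nondeg (Module.finrank ℂ W) W (ω.restrict W) hAltW hNW rfl
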